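/- If T is a pregeometric theory (algebraic closure satisfies the exchange property), then M-independence coincides with m-independence: for all small sets A, B, C, A ⫝M_C B if and only if A ⫝a_D B for every D with C ⊆ D ⊆ BC. -/

import Mathlib

open FirstOrder FirstOrder.Language Set Cardinal

universe u v w x

namespace PaperDiv

variable (L : FirstOrder.Language.{u, v}) (M : Type w) [L.Structure M]

/-- Two (possibly infinite) tuples have the same complete type over the parameter set `C`. -/
def SameType (C : Set M) {ι : Type x} (a b : ι → M) : Prop :=
  ∀ (n : ℕ) (φ : L.Formula (ι ⊕ Fin n)) (c : Fin n → M),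
    (∀ i, c i ∈ C) → (φ.Realize (Sum.elim a c) ↔ φ.Realize (Sum.elim b c))

/-- The model-theoretic algebraic closure of a set `C`. -/
def acl (C : Set M) : Set M :=
  {a | ∃ (n : ℕ) (φ : L.Formula (Fin (n + 1))) (c : Fin n → M),
    (∀ i, c i ∈ C) ∧ φ.Realize (Fin.cons a c) ∧ {x : M | φ.Realize (Fin.cons x c)}.Finite}

/-- A sequence of `ι`-tuples is indiscernible over `C`. -/
def Indiscernible (C : Set M) {ι : Type x} (b : ℕ → ι → M) : Prop :=
  ∀ (n : ℕ) (s t : Fin n → ℕ), StrictMono s → StrictMono t →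
    SameType L M C (fun p : Fin n × ι => b (s p.1) p.2) (fun p : Fin n × ι => b (t p.1) p.2)

/-- The formula `φ(x, b)` divides over `C`:  there is a `C`-indiscernible sequence starting
with `b` along which the instances of `φ` are `k`-inconsistent. -/
def FormulaDividesOver (C : Set M) {ι : Type x} {m : ℕ}
    (φ : L.Formula (ι ⊕ Fin m)) (b : Fin m → M) : Prop :=
  ∃ (bs : ℕ → Fin m → M) (k : ℕ), 0 < k ∧ bs 0 = b ∧ Indiscernible L M C bs ∧
    ∀ s : Finset ℕ, s.card = k → ¬∃ x : ι → M, ∀ i ∈ s, φ.Realize (Sum.elim x (bs i))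

/-- The complete type of the tuple `a` over the parameter set `B` divides over `C`. -/
def TypeDividesOver (C B : Set M) {ι : Type x} (a : ι → M) : Prop :=
  ∃ (m : ℕ) (φ : L.Formula (ι ⊕ Fin m)) (b : Fin m → M),
    (∀ i, b i ∈ B) ∧ φ.Realize (Sum.elim a b) ∧ FormulaDividesOver L M C φ b

/-- The complete type of the tuple `a` over the parameter set `B` forks over `C`: it implies a
finite disjunction of formulas (with arbitrary parameters), each of which divides over `C`. -/
def TypeForksOver (C B : Set M) {ι : Type x} (a : ι → M) : Prop :=
  ∃ (N : ℕ) (m : Fin N → ℕ) (φ : ∀ j, L.Formula (ι ⊕ Fin (m j))) (b : ∀ j, Fin (m j) → M),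
    (∀ j, FormulaDividesOver L M C (φ j) (b j)) ∧
    ∀ x : ι → M, SameType L M B x a → ∃ j, (φ j).Realize (Sum.elim x (b j))

/-- Dividing independence: `A ⫝d_C B`, i.e. `tp(A/BC)` does not divide over `C`. -/
def dind (A C B : Set M) : Prop :=
  ¬TypeDividesOver L M C (B ∪ C) (fun x : A => (x : M))

/-- Forking independence: `A ⫝f_C B`, i.e. `tp(A/BC)` does not fork over `C`. -/
def find (A C B : Set M) : Prop :=
  ¬TypeForksOver L M C (B ∪ C) (fun x : A => (x : M))

/-- Algebraic independence: `A ⫝a_C B`. -/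
def aind (A C B : Set M) : Prop :=
  acl L M (A ∪ C) ∩ acl L M (B ∪ C) = acl L M C

/-- M-independence: `A ⫝M_C B`. -/
def Mind (A C B : Set M) : Prop :=
  ∀ D : Set M, C ⊆ D → D ⊆ acl L M (B ∪ C) → aind L M A D B

/-- m-independence: `A ⫝m_C B`. -/
def mind (A C B : Set M) : Prop :=
  ∀ D : Set M, C ⊆ D → D ⊆ B ∪ C → aind L M A D B

/-- `M` is a monster model (with respect to the cardinal `κ` bounding the "small" sets):
it is strongly `κ`-homogeneous and `κ`-saturated. -/
structure IsMonster (κ : Cardinal.{w}) : Prop where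
  aleph0_lt : ℵ₀ < κ
  homogeneous : ∀ (C : Set M) {ι : Type w} (a b : ι → M), #C < κ → #ι < κ →
    SameType L M C a b → ∃ σ : M ≃[L] M, (∀ c ∈ C, σ c = c) ∧ ∀ i, σ (a i) = b i
  saturated : ∀ (C : Set M) {ι : Type w}, #C < κ → #ι < κ →
    ∀ p : Set ((n : ℕ) × L.Formula (ι ⊕ Fin n) × (Fin n → M)),
      (∀ q ∈ p, ∀ i, q.2.2 i ∈ C) →
      (∀ s : Finset ((n : ℕ) × L.Formula (ι ⊕ Fin n) × (Fin n → M)), ↑s ⊆ p →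
        ∃ x : ι → M, ∀ q ∈ s, q.2.1.Realize (Sum.elim x q.2.2)) →
      ∃ x : ι → M, ∀ q ∈ p, q.2.1.Realize (Sum.elim x q.2.2)


/-- The theory is pregeometric: algebraic closure satisfies the exchange property. -/
def Pregeometric : Prop :=
  ∀ (C : Set M) (a b : M), a ∈ acl L M (C ∪ {b}) → a ∉ acl L M C → b ∈ acl L M (C ∪ {a})

section Aux

variable {L M}

private noncomputable def finsetIInf {α β : Type*} (s : Finset β) (f : β → L.Formula α) :
    L.Formula α :=
  BoundedFormula.iInf (fun b : s => f b)

private noncomputable def finsetISup {α β : Type*} (s : Finset β) (f : β → L.Formula α) :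
    L.Formula α :=
  BoundedFormula.iSup (fun b : s => f b)

private theorem realize_iInf' {α β : Type*} (s : Finset β) (f : β → L.Formula α) (v : α → M) :
    Formula.Realize (finsetIInf s f) v ↔ ∀ b ∈ s, Formula.Realize (f b) v := by
  show BoundedFormula.Realize (BoundedFormula.iInf _) v default ↔ _
  rw [BoundedFormula.realize_iInf]
  exact ⟨fun h b hb => h ⟨b, hb⟩, fun h b => h b b.2⟩

private theorem realize_iSup' {α β : Type*} (s : Finset β) (f : β → L.Formula α) (v : α → M) :
    Formula.Realize (finsetISup s f) v ↔ ∃ b ∈ s, Formula.Realize (f b) v := by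
  show BoundedFormula.Realize (BoundedFormula.iSup _) v default ↔ _
  rw [BoundedFormula.realize_iSup]
  exact ⟨fun ⟨b, h⟩ => ⟨b, b.2, h⟩, fun ⟨b, hb, h⟩ => ⟨⟨b, hb⟩, h⟩⟩

theorem acl_insert_subset {X : Set M} {b : M} (hb : b ∈ acl L M X) :
    acl L M (X ∪ {b}) ⊆ acl L M X := by
  classical
  rintro a ⟨n, φ, c, hc, haφ, hSfin⟩
  obtain ⟨m, ψ, d, hd, hbψ, hTfin⟩ := hb
  set P : Fin n → Prop := fun i => c i ∈ X with hP
  have hPb : ∀ i, ¬ P i → c i = b := by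
    intro i hi
    rcases hc i with h | h
    · exact absurd h hi
    · simpa using h
  letI : Fintype {i : Fin n // P i} := Fintype.ofFinite _
  set J := {i : Fin n // P i}
  set n₁ := Fintype.card J with hn₁
  set eJ : Fin n₁ ≃ J := (Fintype.equivFin J).symm with heJ
  set k₀ := hSfin.toFinset.card with hk₀
  set cc : M → Fin n → M := fun y i => if P i then c i else y with hcc
  have hccb : cc b = c := by
    funext i
    by_cases h : P i
    · simp [hcc, h]
    · simp [hcc, h, (hPb i h).symm]
  set g : Fin (n + 1) → (Fin 1 ⊕ (J ⊕ Fin m)) ⊕ Fin 1 :=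
    Fin.cases (Sum.inl (Sum.inl 0))
      (fun i => if h : P i then Sum.inl (Sum.inr (Sum.inl ⟨i, h⟩)) else Sum.inr 0) with hg
  set h' : Fin (m + 1) → (Fin 1 ⊕ (J ⊕ Fin m)) ⊕ Fin 1 :=
    Fin.cases (Sum.inr 0) (fun j => Sum.inl (Sum.inr (Sum.inr j))) with hh'
  set gz : Fin (k₀ + 1) → Fin (n + 1) →
      ((Fin 1 ⊕ (J ⊕ Fin m)) ⊕ Fin 1) ⊕ Fin (k₀ + 1) :=
    fun j => Fin.cases (Sum.inr j) (fun i => Sum.inl (g i.succ)) with hgz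
  set χg : L.Formula ((((Fin 1 ⊕ (J ⊕ Fin m)) ⊕ Fin 1)) ⊕ Fin (k₀ + 1)) :=
    (finsetIInf Finset.univ (fun j : Fin (k₀ + 1) => φ.relabel (gz j))).imp
      (finsetISup
        (Finset.univ.filter fun p : Fin (k₀ + 1) × Fin (k₀ + 1) => p.1 ≠ p.2)
        (fun p => Term.equal (Term.var (Sum.inr p.1)) (Term.var (Sum.inr p.2)))) with hχg
  set guard : L.Formula ((Fin 1 ⊕ (J ⊕ Fin m)) ⊕ Fin 1) :=
    Formula.iAlls (Fin (k₀ + 1)) χg with hguard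
  set χ : L.Formula (Fin 1 ⊕ (J ⊕ Fin m)) :=
    Formula.iExs (Fin 1) ((φ.relabel g ⊓ ψ.relabel h') ⊓ guard) with hχ
  set N := n₁ + m with hN
  set gf : (Fin 1 ⊕ (J ⊕ Fin m)) → Fin (N + 1) :=
    Sum.elim (fun _ => 0)
      (fun jv => Fin.succ (finSumFinEquiv (Sum.map (fun j : J => eJ.symm j) id jv))) with hgf
  set Φ : L.Formula (Fin (N + 1)) := χ.relabel gf with hΦdef
  set e : Fin N → M :=
    fun k => Sum.elim (fun j : Fin n₁ => c (eJ j)) d (finSumFinEquiv.symm k) with he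
  set U : M → M → ((Fin 1 ⊕ (J ⊕ Fin m)) ⊕ Fin 1) → M :=
    fun x y => Sum.elim (Sum.elim (fun _ => x) (Sum.elim (fun j : J => c j) d)) (fun _ => y)
     with hU
  -- computation of the composed valuations
  have hUg : ∀ x y : M, (U x y) ∘ g = Fin.cons x (cc y) := by
    intro x y
    funext i
    refine Fin.cases ?_ (fun i => ?_) i
    · simp [hU, hg]
    · by_cases h : P i <;> simp [hU, hg, hcc, h]
  have hUh : ∀ x y : M, (U x y) ∘ h' = Fin.cons y d := by
    intro x y
    funext j
    refine Fin.cases ?_ (fun j => ?_) j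
    · simp [hU, hh']
    · simp [hU, hh']
  have hUgz : ∀ (x y : M) (zs : Fin (k₀ + 1) → M) (j : Fin (k₀ + 1)),
      (fun a => Sum.elim (U x y) zs (id a)) ∘ gz j = Fin.cons (zs j) (cc y) := by
    intro x y zs j
    funext i
    refine Fin.cases ?_ (fun i => ?_) i
    · simp [hgz]
    · by_cases h : P i <;> simp [hU, hgz, hg, hcc, h]
  have hχgR : ∀ (x y : M) (zs : Fin (k₀ + 1) → M),
      χg.Realize (fun a => Sum.elim (U x y) zs (id a)) ↔
        ((∀ j, φ.Realize (Fin.cons (zs j) (cc y))) →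
          ∃ p : Fin (k₀ + 1) × Fin (k₀ + 1), p.1 ≠ p.2 ∧ zs p.1 = zs p.2) := by
    intro x y zs
    rw [hχg, Formula.realize_imp, realize_iInf', realize_iSup']
    constructor
    · intro h h2
      obtain ⟨p, hp, hps⟩ := h (by
        intro j _
        rw [Formula.realize_relabel, hUgz]
        exact h2 j)
      refine ⟨p, by simpa using hp, by simpa using hps⟩
    · intro h h2
      obtain ⟨p, hp, hps⟩ := h (by
        intro j
        rw [← hUgz x y zs j, ← Formula.realize_relabel]
        exact h2 j (Finset.mem_univ j))
      exact ⟨p, by simpa using hp, by simpa using hps⟩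
  have hΦ : ∀ x : M, Φ.Realize (Fin.cons x e) ↔
      ∃ y : M, ψ.Realize (Fin.cons y d) ∧ φ.Realize (Fin.cons x (cc y)) ∧
        ∀ zs : Fin (k₀ + 1) → M, (∀ j, φ.Realize (Fin.cons (zs j) (cc y))) →
          ∃ p : Fin (k₀ + 1) × Fin (k₀ + 1), p.1 ≠ p.2 ∧ zs p.1 = zs p.2 := by
    intro x
    have hcomp : (Fin.cons x e : Fin (N + 1) → M) ∘ gf =
        Sum.elim (fun _ => x) (Sum.elim (fun j : J => c j) d) := by
      funext v
      rcases v with v | v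
      · simp [hgf, he]
      · rcases v with j | jm
        · simp [hgf, he]
        · simp [hgf, he]
    rw [hΦdef, Formula.realize_relabel, hcomp, hχ, Formula.realize_iExs]
    have hval : ∀ Y : Fin 1 → M,
        Sum.elim (Sum.elim (fun _ => x) (Sum.elim (fun j : J => c j) d)) Y =
          U x (Y 0) := by
      intro Y
      funext v
      rcases v with v | v
      · simp [hU]
      · simp [hU, Subsingleton.elim v 0]
    constructor
    · rintro ⟨Y, hY⟩
      rw [hval Y] at hY
      rw [Formula.realize_inf, Formula.realize_inf, Formula.realize_relabel,
        Formula.realize_relabel, hUg, hUh] at hY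
      obtain ⟨⟨h1, h2⟩, h3⟩ := hY
      refine ⟨Y 0, h2, h1, fun zs => ?_⟩
      rw [hguard, Formula.realize_iAlls] at h3
      exact (hχgR x (Y 0) zs).1 (h3 zs)
    · rintro ⟨y, h1, h2, h3⟩
      refine ⟨fun _ => y, ?_⟩
      rw [hval (fun _ => y)]
      rw [Formula.realize_inf, Formula.realize_inf, Formula.realize_relabel,
        Formula.realize_relabel, hUg, hUh]
      refine ⟨⟨h2, h1⟩, ?_⟩
      rw [hguard, Formula.realize_iAlls]
      intro zs
      exact (hχgR x y zs).2 (h3 zs)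
  refine ⟨N, Φ, e, ?_, ?_, ?_⟩
  · intro k
    rcases hsk : finSumFinEquiv.symm k with j | jm
    · simpa [he, hsk] using (eJ j).2
    · simpa [he, hsk] using hd jm
  · refine (hΦ a).2 ⟨b, hbψ, by rwa [hccb], ?_⟩
    rw [hccb]
    intro zs hzs
    have : ∀ j, zs j ∈ hSfin.toFinset := by
      intro j
      rw [Set.Finite.mem_toFinset]
      exact hzs j
    obtain ⟨i, j, hij, hmap⟩ := Fintype.exists_ne_map_eq_of_card_lt
      (fun j : Fin (k₀ + 1) => (⟨zs j, this j⟩ : {z // z ∈ hSfin.toFinset}))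
      (by simp [hk₀])
    exact ⟨(i, j), hij, by simpa using congrArg Subtype.val hmap⟩
  · have hsub : {x : M | Φ.Realize (Fin.cons x e)} ⊆
        ⋃ y ∈ {z : M | ψ.Realize (Fin.cons z d)},
          {x : M | φ.Realize (Fin.cons x (cc y)) ∧
            {z : M | φ.Realize (Fin.cons z (cc y))}.Finite} := by
      intro x hx
      obtain ⟨y, h1, h2, h3⟩ := (hΦ x).1 hx
      have hfin : {z : M | φ.Realize (Fin.cons z (cc y))}.Finite := by
        by_contra hinf
        have hinf' : {z : M | φ.Realize (Fin.cons z (cc y))}.Infinite := hinf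
        obtain ⟨p, hp, hps⟩ := h3
          (fun j => (Set.Infinite.natEmbedding _ hinf' (j : ℕ) : M))
          (fun j => (Set.Infinite.natEmbedding _ hinf' (j : ℕ)).2)
        exact hp (Fin.val_injective ((Set.Infinite.natEmbedding _ hinf').injective
          (Subtype.coe_injective hps)))
      exact Set.mem_biUnion h1 ⟨h2, hfin⟩
    refine Set.Finite.subset (Set.Finite.biUnion hTfin fun y _ => ?_) hsub
    by_cases hf : {z : M | φ.Realize (Fin.cons z (cc y))}.Finite
    · exact hf.subset fun x hx => hx.1
    · exact Set.Finite.subset Set.finite_empty (fun x hx => absurd hx.2 hf)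

end Aux

section Aux2

variable {L M}

theorem acl_mono {X Y : Set M} (h : X ⊆ Y) : acl L M X ⊆ acl L M Y := by
  rintro a ⟨n, φ, c, hc, h1, h2⟩
  exact ⟨n, φ, c, fun i => h (hc i), h1, h2⟩

theorem subset_acl (X : Set M) : X ⊆ acl L M X := by
  intro a ha
  refine ⟨1, Term.equal (Term.var 0) (Term.var 1), fun _ => a, fun _ => ha, ?_, ?_⟩
  · simp [Formula.realize_equal]
  · refine (Set.finite_singleton a).subset ?_
    intro x hx
    simp only [Set.mem_setOf_eq, Formula.realize_equal, Term.realize_var] at hx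
    simpa using hx

theorem acl_union_finset {X : Set M} :
    ∀ s : Finset M, ↑s ⊆ acl L M X → acl L M (X ∪ ↑s) ⊆ acl L M X := by
  classical
  intro s
  induction s using Finset.induction_on with
  | empty => intro _; simpa using Set.Subset.rfl
  | @insert a s ha ih =>
    intro hs
    have haX : a ∈ acl L M X := hs (by simp)
    have hseteq : X ∪ ↑(insert a s) = (X ∪ ↑s) ∪ {a} := by
      ext t
      simp only [Set.mem_union, Finset.coe_insert, Set.mem_insert_iff, Finset.mem_coe,
        Set.mem_singleton_iff]
      tauto
    rw [hseteq]
    refine Set.Subset.trans (acl_insert_subset ?_) (ih ?_)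
    · exact acl_mono Set.subset_union_left haX
    · exact Set.Subset.trans (by simp) hs

theorem acl_trans {X Y : Set M} (hYX : Y ⊆ acl L M X) : acl L M Y ⊆ acl L M X := by
  rintro a ⟨n, φ, c, hc, hr, hf⟩
  have hfin : (Set.range c).Finite := Set.finite_range c
  have h1 : a ∈ acl L M (X ∪ ↑hfin.toFinset) :=
    ⟨n, φ, c, fun i => Or.inr (by simp), hr, hf⟩
  refine acl_union_finset hfin.toFinset ?_ h1
  intro t ht
  simp only [Set.Finite.coe_toFinset, Set.mem_range] at ht
  obtain ⟨i, rfl⟩ := ht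
  exact hYX (hc i)

end Aux2


section Aux3

variable {L M}

theorem skew_lemma {A B C : Set M} (hpre : Pregeometric L M)
    (Hstar : ∀ x ∈ B, ∀ X₀ : Set M, X₀ ⊆ B →
      x ∈ acl L M (A ∪ (C ∪ X₀)) → x ∈ acl L M (C ∪ X₀)) :
    ∀ X₀ : Finset M, ↑X₀ ⊆ B → ∀ A₁ : Set M, A₁ ⊆ A → ∀ α ∈ A,
      α ∈ acl L M ((A₁ ∪ C) ∪ ↑X₀) → α ∈ acl L M (A₁ ∪ C) := by
  classical
  intro X₀
  induction X₀ using Finset.strongInductionOn with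
  | _ X₀ ih =>
    intro hX₀B A₁ hA₁ α hαA hα
    rcases Finset.eq_empty_or_nonempty X₀ with rfl | ⟨x, hx⟩
    · simpa using hα
    · have hsub_erase : ↑(X₀.erase x) ⊆ B :=
        fun t ht => hX₀B (Finset.mem_coe.2 (Finset.mem_of_mem_erase (Finset.mem_coe.1 ht)))
      by_cases hcase : α ∈ acl L M ((A₁ ∪ C) ∪ ↑(X₀.erase x))
      · exact ih (X₀.erase x) (Finset.erase_ssubset hx) hsub_erase A₁ hA₁ α hαA hcase
      · have hseteq : (A₁ ∪ C) ∪ (X₀ : Set M) = ((A₁ ∪ C) ∪ ↑(X₀.erase x)) ∪ {x} := by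
          ext t
          simp only [Set.mem_union, Finset.coe_erase, Set.mem_diff, Finset.mem_coe,
            Set.mem_singleton_iff]
          by_cases htx : t = x
          · subst htx; simp [hx]
          · simp [htx]
        have hex : x ∈ acl L M (((A₁ ∪ C) ∪ ↑(X₀.erase x)) ∪ {α}) :=
          hpre _ α x (by rw [← hseteq]; exact hα) hcase
        have hx2 : x ∈ acl L M (A ∪ (C ∪ ↑(X₀.erase x))) := by
          refine acl_mono ?_ hex
          intro t ht
          rcases ht with (((h | h) | h) | h)
          · exact Or.inl (hA₁ h)
          · exact Or.inr (Or.inl h)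
          · exact Or.inr (Or.inr h)
          · exact Or.inl (h ▸ hαA)
        have hx3 : x ∈ acl L M (C ∪ ↑(X₀.erase x)) :=
          Hstar x (hX₀B (Finset.mem_coe.2 hx)) _ hsub_erase hx2
        have hsubacl : (A₁ ∪ C) ∪ (X₀ : Set M) ⊆ acl L M ((A₁ ∪ C) ∪ ↑(X₀.erase x)) := by
          intro t ht
          rcases ht with h | h
          · exact subset_acl _ (Or.inl h)
          · by_cases htx : t = x
            · subst htx
              exact acl_mono (fun u hu => hu.elim (fun h1 => Or.inl (Or.inr h1)) Or.inr) hx3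
            · refine subset_acl _ (Or.inr ?_)
              simp only [Finset.coe_erase, Set.mem_diff, Finset.mem_coe]
              exact ⟨h, by simpa using htx⟩
        exact ih (X₀.erase x) (Finset.erase_ssubset hx) hsub_erase A₁ hA₁ α hαA
          (acl_trans hsubacl hα)

theorem main_lemma {A B C : Set M} (hpre : Pregeometric L M)
    (Hstar : ∀ x ∈ B, ∀ X₀ : Set M, X₀ ⊆ B →
      x ∈ acl L M (A ∪ (C ∪ X₀)) → x ∈ acl L M (C ∪ X₀)) :
    ∀ A₀ : Finset M, ↑A₀ ⊆ A → ∀ d : Set M, d ⊆ acl L M (B ∪ C) →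
      ∀ y ∈ acl L M (B ∪ C), y ∈ acl L M (↑A₀ ∪ (C ∪ d)) → y ∈ acl L M (C ∪ d) := by
  classical
  intro A₀
  induction A₀ using Finset.strongInductionOn with
  | _ A₀ ih =>
    intro hA₀A d hd y hyBC hy
    rcases Finset.eq_empty_or_nonempty A₀ with rfl | ⟨α, hα⟩
    · simpa using hy
    · have hA₁A : ↑(A₀.erase α) ⊆ A :=
        fun t ht => hA₀A (Finset.mem_coe.2 (Finset.mem_of_mem_erase (Finset.mem_coe.1 ht)))
      by_cases hcase : y ∈ acl L M (↑(A₀.erase α) ∪ (C ∪ d))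
      · exact ih (A₀.erase α) (Finset.erase_ssubset hα) hA₁A d hd y hyBC hcase
      · have hseteq : (A₀ : Set M) ∪ (C ∪ d) = (↑(A₀.erase α) ∪ (C ∪ d)) ∪ {α} := by
          ext t
          simp only [Set.mem_union, Finset.coe_erase, Set.mem_diff, Finset.mem_coe,
            Set.mem_singleton_iff]
          by_cases htα : t = α
          · subst htα; simp [hα]
          · simp [htα]
        have hex : α ∈ acl L M ((↑(A₀.erase α) ∪ (C ∪ d)) ∪ {y}) :=
          hpre _ y α (by rw [← hseteq]; exact hy) hcase
        have hsub2 : (↑(A₀.erase α) ∪ (C ∪ d)) ∪ {y} ⊆ acl L M ((↑(A₀.erase α) ∪ C) ∪ B) := by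
          intro t ht
          have hBC : acl L M (B ∪ C) ⊆ acl L M ((↑(A₀.erase α) ∪ C) ∪ B) :=
            acl_mono (fun u hu => hu.elim Or.inr (fun h1 => Or.inl (Or.inr h1)))
          rcases ht with (h | (h | h)) | h
          · exact subset_acl _ (Or.inl (Or.inl h))
          · exact subset_acl _ (Or.inl (Or.inr h))
          · exact hBC (hd h)
          · exact hBC (h ▸ hyBC)
        have hαACB : α ∈ acl L M ((↑(A₀.erase α) ∪ C) ∪ B) := acl_trans hsub2 hex
        obtain ⟨n, φ, c, hc, hr, hf⟩ := hαACB
        have hXfin : (Set.range c ∩ B).Finite :=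
          Set.Finite.inter_of_left (Set.finite_range c) B
        have hα2 : α ∈ acl L M ((↑(A₀.erase α) ∪ C) ∪ ↑hXfin.toFinset) := by
          refine ⟨n, φ, c, fun i => ?_, hr, hf⟩
          rcases hc i with h | h
          · exact Or.inl h
          · refine Or.inr ?_
            simp only [Finset.mem_coe, Set.Finite.mem_toFinset, Set.mem_inter_iff]
            exact ⟨Set.mem_range_self i, h⟩
        have hα3 : α ∈ acl L M (↑(A₀.erase α) ∪ C) :=
          skew_lemma hpre Hstar hXfin.toFinset
            (by rw [Set.Finite.coe_toFinset]; exact Set.inter_subset_right)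
            ↑(A₀.erase α) hA₁A α (hA₀A (Finset.mem_coe.2 hα)) hα2
        have hsubacl : (A₀ : Set M) ∪ (C ∪ d) ⊆ acl L M (↑(A₀.erase α) ∪ (C ∪ d)) := by
          intro t ht
          rcases ht with h | h
          · by_cases htα : t = α
            · subst htα
              exact acl_mono (fun u hu => hu.elim Or.inl (fun h1 => Or.inr (Or.inl h1))) hα3
            · refine subset_acl _ (Or.inl ?_)
              simp only [Finset.coe_erase, Set.mem_diff, Finset.mem_coe]
              exact ⟨h, by simpa using htα⟩
          · exact subset_acl _ (Or.inr h)
        exact ih (A₀.erase α) (Finset.erase_ssubset hα) hA₁A d hd y hyBC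
          (acl_trans hsubacl hy)

end Aux3

/-- If the theory is pregeometric, then M-independence coincides with
m-independence: `A ⫝M_C B` iff `A ⫝a_D B` for every `D` with `C ⊆ D ⊆ BC`. -/
theorem Mind_iff_mind_of_pregeometric
    (κ : Cardinal.{w}) (hM : IsMonster L M κ) (hpre : Pregeometric L M) :
    ∀ A C B : Set M, Mind L M A C B ↔
      ∀ D : Set M, C ⊆ D → D ⊆ B ∪ C → aind L M A D B := by
  intro A C B
  constructor
  · intro h D hCD hDBC
    exact h D hCD (hDBC.trans (subset_acl (B ∪ C)))
  · intro h D hCD hDacl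
    have Hstar : ∀ x ∈ B, ∀ X₀ : Set M, X₀ ⊆ B →
        x ∈ acl L M (A ∪ (C ∪ X₀)) → x ∈ acl L M (C ∪ X₀) := by
      intro x hxB X₀ hX₀ hx
      have h1 := h (C ∪ X₀) Set.subset_union_left
        (Set.union_subset (Set.subset_union_right) (fun t ht => Or.inl (hX₀ ht)))
      have h2 : x ∈ acl L M (A ∪ (C ∪ X₀)) ∩ acl L M (B ∪ (C ∪ X₀)) :=
        ⟨hx, subset_acl _ (Or.inl hxB)⟩
      rw [h1] at h2
      exact h2
    unfold aind
    apply Set.Subset.antisymm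
    · rintro y ⟨hy1, hy2⟩
      have hBD : B ∪ D ⊆ acl L M (B ∪ C) := by
        intro t ht
        rcases ht with h' | h'
        · exact subset_acl _ (Or.inl h')
        · exact hDacl h'
      have hyBC : y ∈ acl L M (B ∪ C) := acl_trans hBD hy2
      obtain ⟨n, φ, c, hc, hr, hf⟩ := hy1
      have hAfin : (Set.range c ∩ A).Finite :=
        Set.Finite.inter_of_left (Set.finite_range c) A
      have hy1' : y ∈ acl L M (↑hAfin.toFinset ∪ (C ∪ (Set.range c ∩ D))) := by
        refine ⟨n, φ, c, fun i => ?_, hr, hf⟩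
        rcases hc i with h' | h'
        · refine Or.inl ?_
          simp only [Finset.mem_coe, Set.Finite.mem_toFinset, Set.mem_inter_iff]
          exact ⟨Set.mem_range_self i, h'⟩
        · exact Or.inr (Or.inr ⟨Set.mem_range_self i, h'⟩)
      have hdsub : Set.range c ∩ D ⊆ acl L M (B ∪ C) :=
        fun t ht => hDacl ht.2
      have := main_lemma (A := A) (B := B) (C := C) hpre Hstar hAfin.toFinset
        (by rw [Set.Finite.coe_toFinset]; exact Set.inter_subset_right)
        (Set.range c ∩ D) hdsub y hyBC hy1'
      refine acl_mono ?_ this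
      exact Set.union_subset hCD (fun t ht => ht.2)
    · intro y hy
      exact ⟨acl_mono Set.subset_union_right hy, acl_mono Set.subset_union_right hy⟩


end PaperDiv
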